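/- Let A be a K-approximate subgroup of a group, let G be a group, and suppose φ : A → G is a centred Freiman 3-homomorphism. Then the image φ(A) is a K-approximate subgroup of G. -/
import Mathlib


open Finset Pointwise

theorem freiman_image_approx_group {H G : Type*} [Group H] [DecidableEq H] [Group G] [DecidableEq G]
    (A : Finset H) (K : ℝ) (hK : 1 ≤ K)
    (hsym : A⁻¹ = A) (hone : (1 : H) ∈ A)
    (X : Finset H) (hX : (X.card : ℝ) ≤ K) (hcov : A * A ⊆ X * A)
    (φ : H → G)
    (hhom : ∀ x₁ ∈ A, ∀ x₂ ∈ A, ∀ x₃ ∈ A, ∀ y₁ ∈ A, ∀ y₂ ∈ A, ∀ y₃ ∈ A,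
      x₁ * x₂ * x₃ = y₁ * y₂ * y₃ → φ x₁ * φ x₂ * φ x₃ = φ y₁ * φ y₂ * φ y₃)
    (hcentred : φ 1 = 1) :
    (A.image φ)⁻¹ = A.image φ ∧ (1 : G) ∈ A.image φ ∧
      ∃ Y : Finset G, (Y.card : ℝ) ≤ K ∧ A.image φ * A.image φ ⊆ Y * A.image φ := by
  classical
  have hinv : ∀ a ∈ A, a⁻¹ ∈ A := by
    intro a ha
    rw [← hsym]
    simpa using ha
  have hφinv : ∀ a ∈ A, φ a⁻¹ = (φ a)⁻¹ := by
    intro a ha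
    have h := hhom a ha a⁻¹ (hinv a ha) 1 hone 1 hone 1 hone 1 hone (by group)
    rw [hcentred] at h
    have h2 : φ a * φ a⁻¹ = 1 := by simpa using h
    exact (inv_eq_of_mul_eq_one_right h2).symm
  set P : H → G → Prop := fun x g =>
    ∃ a ∈ A, ∃ b ∈ A, ∃ c ∈ A, a * b * c = x ∧ φ a * φ b * φ c = g with hPdef
  have hP : ∀ x g g', P x g → P x g' → g = g' := by
    rintro x g g' ⟨a, ha, b, hb, c, hc, hx, hg⟩ ⟨a', ha', b', hb', c', hc', hx', hg'⟩
    rw [← hg, ← hg']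
    exact hhom a ha b hb c hc a' ha' b' hb' c' hc' (hx.trans hx'.symm)
  set ψ : H → G := fun x => if h : ∃ g, P x g then h.choose else 1 with hψdef
  have hψ : ∀ x g, P x g → ψ x = g := by
    intro x g hg
    have h : ∃ g, P x g := ⟨g, hg⟩
    simp only [hψdef, dif_pos h]
    exact hP x _ g h.choose_spec hg
  refine ⟨?_, ?_, X.image ψ, ?_, ?_⟩
  · ext g
    simp only [Finset.mem_inv, Finset.mem_image]
    constructor
    · rintro ⟨u, ⟨a, ha, rfl⟩, rfl⟩
      exact ⟨a⁻¹, hinv a ha, hφinv a ha⟩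
    · rintro ⟨a, ha, rfl⟩
      exact ⟨(φ a)⁻¹, ⟨a⁻¹, hinv a ha, hφinv a ha⟩, by simp⟩
  · exact Finset.mem_image.mpr ⟨1, hone, hcentred⟩
  · calc ((X.image ψ).card : ℝ) ≤ (X.card : ℝ) := by exact_mod_cast Finset.card_image_le
      _ ≤ K := hX
  · intro g hg
    rw [Finset.mem_mul] at hg
    obtain ⟨u, hu, v, hv, rfl⟩ := hg
    rw [Finset.mem_image] at hu hv
    obtain ⟨a, ha, rfl⟩ := hu
    obtain ⟨b, hb, rfl⟩ := hv
    have hab : a * b ∈ X * A := hcov (Finset.mul_mem_mul ha hb)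
    rw [Finset.mem_mul] at hab
    obtain ⟨x, hx, c, hc, hxc⟩ := hab
    have hPx : P x (φ a * φ b * (φ c)⁻¹) :=
      ⟨a, ha, b, hb, c⁻¹, hinv c hc, by rw [← hxc]; group, by rw [hφinv c hc]⟩
    have hgoal : φ a * φ b = ψ x * φ c := by
      rw [hψ x _ hPx]; group
    rw [hgoal]
    exact Finset.mul_mem_mul (Finset.mem_image_of_mem ψ hx) (Finset.mem_image_of_mem φ hc)
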